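/- arXiv:1711.04041 — 2 statements merged into one kernel-verified Lean document; each statement's English description precedes it below -/
import Mathlib

section
/- Let ψ : ℝ → ℝ be four times continuously differentiable on a neighborhood of a point ϑ* with ψ'(ϑ*) = 0 and ψ''(ϑ*) > 0, and set ζ* := ψ(ϑ*). Suppose Φ is defined on an interval (ζ*, ζ* + δ) with δ > 0, satisfies ψ(Φ(s)) = s and Φ(s) > ϑ* for all s ∈ (ζ*, ζ* + δ), and Φ(s) → ϑ* as s → ζ* from the right. Define A₁ := √(2/ψ''(ϑ*)), A₂ := −ψ'''(ϑ*)/(3 ψ''(ϑ*)²), and A₃ := (5/(18√2)) · ψ'''(ϑ*)²/ψ''(ϑ*)^{7/2} − (1/(6√2)) · ψ⁽⁴⁾(ϑ*)/ψ''(ϑ*)^{5/2}. Then, as s → ζ* from the right, Φ(s) = ϑ* + A₁ (s − ζ*)^{1/2} + A₂ (s − ζ*) + A₃ (s − ζ*)^{3/2} + o((s − ζ*)^{3/2}). -/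
open Real Filter Set

lemma rpow_three_halves {x : ℝ} (hx : 0 ≤ x) :
    x ^ ((3:ℝ)/2) = Real.sqrt x ^ 3 := by
  rw [Real.sqrt_eq_rpow, ← Real.rpow_natCast (x ^ (1/(2:ℝ))) 3, ← Real.rpow_mul hx]
  norm_num

lemma iteratedDerivWithin_Icc_eq {f : ℝ → ℝ} {O : Set ℝ} (hO : IsOpen O)
    (hf : ContDiffOn ℝ 4 f O) {a x : ℝ} (hax : a < x) (hsub : Icc a x ⊆ O)
    {k : ℕ} (hk : k ≤ 4) {y : ℝ} (hy : y ∈ Icc a x) :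
    iteratedDerivWithin k f (Icc a x) y = iteratedDeriv k f y := by
  have hu : UniqueDiffOn ℝ O := hO.uniqueDiffOn
  have hser : HasFTaylorSeriesUpToOn 4 f (ftaylorSeriesWithin ℝ f O) O :=
    hf.ftaylorSeriesWithin hu
  have h1 := (hser.mono hsub).eq_iteratedFDerivWithin_of_uniqueDiffOn
      (by exact_mod_cast hk) (uniqueDiffOn_Icc hax) hy
  have h2 : ftaylorSeriesWithin ℝ f O y k = iteratedFDeriv ℝ k f y :=
    iteratedFDerivWithin_of_isOpen k hO (hsub hy)
  rw [iteratedDerivWithin_eq_iteratedFDerivWithin, iteratedDeriv_eq_iteratedFDeriv, ← h1, h2]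

lemma taylor_peano {f : ℝ → ℝ} {a : ℝ}
    (h : ∃ U ∈ nhds a, ContDiffOn ℝ 4 f U) :
    Tendsto (fun x => (f x - f a - iteratedDeriv 1 f a * (x - a)
        - iteratedDeriv 2 f a / 2 * (x - a) ^ 2 - iteratedDeriv 3 f a / 6 * (x - a) ^ 3
        - iteratedDeriv 4 f a / 24 * (x - a) ^ 4) / (x - a) ^ 4)
      (nhdsWithin a (Ioi a)) (nhds 0) := by
  obtain ⟨U, hU, hcd⟩ := h
  set O := interior U with hOdef
  have hO : IsOpen O := isOpen_interior
  have haO : a ∈ O := mem_interior_iff_mem_nhds.2 hU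
  have hfO : ContDiffOn ℝ 4 f O := hcd.mono interior_subset
  obtain ⟨r, hr, hball⟩ : ∃ r > 0, Metric.ball a r ⊆ O := Metric.isOpen_iff.1 hO a haO
  -- continuity of the 4th derivative at a
  have hcont : ContinuousOn (iteratedDeriv 4 f) O := by
    have h1 : ContinuousOn (iteratedDerivWithin 4 f O) O :=
      hfO.continuousOn_iteratedDerivWithin le_rfl hO.uniqueDiffOn
    refine h1.congr fun y hy => ?_
    rw [iteratedDerivWithin_eq_iteratedFDerivWithin, iteratedDeriv_eq_iteratedFDeriv,
      iteratedFDerivWithin_of_isOpen _ hO hy]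
  have hca : ContinuousAt (iteratedDeriv 4 f) a := hcont.continuousAt (hO.mem_nhds haO)
  rw [Metric.tendsto_nhdsWithin_nhds]
  intro ε hε
  obtain ⟨δ₁, hδ₁, hδ₁'⟩ := Metric.continuousAt_iff.1 hca (24 * ε) (by linarith)
  refine ⟨min δ₁ r, lt_min hδ₁ hr, fun x hx hdist => ?_⟩
  have hax : a < x := hx
  have hxa : x - a < min δ₁ r := by
    rw [Real.dist_eq, abs_of_pos (by linarith)] at hdist; exact hdist
  have hsub : Icc a x ⊆ O := by
    intro y hy
    apply hball
    rw [Metric.mem_ball, Real.dist_eq, abs_of_nonneg (by linarith [hy.1])]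
    have := hy.2
    have := lt_of_lt_of_le hxa (min_le_right _ _)
    linarith
  -- Taylor with Lagrange remainder, n = 3
  have hf3 : ContDiffOn ℝ 3 f (Icc a x) := (hfO.mono hsub).of_le (by norm_num)
  have hf' : DifferentiableOn ℝ (iteratedDerivWithin 3 f (Icc a x)) (Ioo a x) := by
    have := (hfO.mono hsub).differentiableOn_iteratedDerivWithin
      (m := 3) (by norm_num) (uniqueDiffOn_Icc hax)
    exact this.mono Ioo_subset_Icc_self
  obtain ⟨ξ, hξ, heq⟩ := taylor_mean_remainder_lagrange (n := 3) hax.ne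
    (by rwa [uIcc_of_le hax.le]) (by rwa [uIcc_of_le hax.le, uIoo_of_le hax.le])
  rw [uIoo_of_le hax.le] at hξ
  rw [uIcc_of_le hax.le] at heq
  have hmem : ∀ k : ℕ, k ≤ 4 →
      iteratedDerivWithin k f (Icc a x) a = iteratedDeriv k f a := fun k hk =>
    iteratedDerivWithin_Icc_eq hO hfO hax hsub hk (left_mem_Icc.2 hax.le)
  have hξmem : iteratedDerivWithin 4 f (Icc a x) ξ = iteratedDeriv 4 f ξ :=
    iteratedDerivWithin_Icc_eq hO hfO hax hsub le_rfl (Ioo_subset_Icc_self hξ)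
  rw [taylor_within_apply] at heq
  simp only [Finset.sum_range_succ, Finset.sum_range_zero, hξmem,
    hmem 0 (by norm_num), hmem 1 (by norm_num), hmem 2 (by norm_num),
    hmem 3 (by norm_num)] at heq
  norm_num [Nat.factorial, iteratedDeriv_one] at heq
  -- heq : f x - (...) = iteratedDeriv 4 f ξ * (x-a)^4 / 24
  have hx4 : (x - a) ^ 4 > 0 := pow_pos (by linarith) 4
  have key : (f x - f a - iteratedDeriv 1 f a * (x - a)
        - iteratedDeriv 2 f a / 2 * (x - a) ^ 2 - iteratedDeriv 3 f a / 6 * (x - a) ^ 3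
        - iteratedDeriv 4 f a / 24 * (x - a) ^ 4) / (x - a) ^ 4
      = (iteratedDeriv 4 f ξ - iteratedDeriv 4 f a) / 24 := by
    rw [div_eq_iff (ne_of_gt hx4), iteratedDeriv_one]
    linear_combination heq
  rw [Real.dist_eq, sub_zero, key]
  have hξd : dist ξ a < δ₁ := by
    rw [Real.dist_eq, abs_of_pos (by linarith [hξ.1])]
    have := hξ.2
    have := lt_of_lt_of_le hxa (min_le_left _ _)
    linarith
  have := hδ₁' hξd
  rw [Real.dist_eq] at this
  rw [abs_div, abs_of_pos (by norm_num : (0:ℝ) < 24), div_lt_iff₀ (by norm_num : (0:ℝ) < 24)]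
  linarith

lemma key_ident {t v H A₁ A₂ A₃ h₁ sb : ℝ} (ht : 0 < t) (hv : 0 < v) (hsb : 0 < sb)
    (hA1 : A₁ * sb = 1) (hA2 : A₂ * sb ^ 2 * (2 * sb) = -(A₁ * h₁))
    (hv2 : v ^ 2 = sb ^ 2 + h₁ * t + H * t ^ 2) :
    (t - A₁ * (t * v) - A₂ * (t ^ 2 * v ^ 2) - A₃ * (t ^ 3 * v ^ 3)) / (t ^ 3 * v ^ 3)
      = (A₁ * h₁ * (h₁ + H * t) / ((v + sb) ^ 2 * (2 * sb)) - A₁ * H / (v + sb)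
          - A₂ * h₁ - A₂ * H * t - A₃ * v ^ 3) / v ^ 3 := by
  have hvsb : (0:ℝ) < v + sb := by linarith
  have hvsb' : v + sb ≠ 0 := ne_of_gt hvsb
  have ht' : t ≠ 0 := ne_of_gt ht
  have hsb' : sb ≠ 0 := ne_of_gt hsb
  -- difference of sqrt as algebraic quotient
  have e4 : v - sb = (h₁ * t + H * t ^ 2) / (v + sb) := by
    rw [eq_div_iff hvsb']
    linear_combination hv2
  -- first-order cancellation
  have e2 : 1 - A₁ * v = -(A₁ * (h₁ * t + H * t ^ 2) / (v + sb)) := by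
    rw [← neg_div, eq_div_iff hvsb']
    linear_combination (-A₁) * hv2 + (-(v + sb)) * hA1
  -- second-order cancellation
  have e3 : -(A₁ * h₁) / (v + sb) - A₂ * sb ^ 2
      = A₁ * h₁ * (v - sb) / ((v + sb) * (2 * sb)) := by
    field_simp
    linear_combination (-(v + sb)) * hA2
  -- numerator identity
  have eN : t - A₁ * (t * v) - A₂ * (t ^ 2 * v ^ 2) - A₃ * (t ^ 3 * v ^ 3)
      = t ^ 3 * (A₁ * h₁ * (h₁ + H * t) / ((v + sb) ^ 2 * (2 * sb)) - A₁ * H / (v + sb)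
          - A₂ * h₁ - A₂ * H * t - A₃ * v ^ 3) := by
    have expand : t - A₁ * (t * v) - A₂ * (t ^ 2 * v ^ 2) - A₃ * (t ^ 3 * v ^ 3)
        = t * (1 - A₁ * v) - A₂ * t ^ 2 * (sb ^ 2 + h₁ * t + H * t ^ 2)
          - A₃ * t ^ 3 * v ^ 3 := by rw [← hv2]; ring
    rw [expand, e2]
    have lhs2 : t * -(A₁ * (h₁ * t + H * t ^ 2) / (v + sb))
          - A₂ * t ^ 2 * (sb ^ 2 + h₁ * t + H * t ^ 2) - A₃ * t ^ 3 * v ^ 3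
        = t ^ 2 * (-(A₁ * h₁) / (v + sb) - A₂ * sb ^ 2)
          - A₁ * H * t ^ 3 / (v + sb) - A₂ * h₁ * t ^ 3 - A₂ * H * t ^ 4
          - A₃ * t ^ 3 * v ^ 3 := by field_simp; ring
    rw [lhs2, e3, e4]
    field_simp
  rw [eN]
  exact mul_div_mul_left _ _ (ne_of_gt (pow_pos ht 3))

lemma key_limit {b c d A₁ A₂ A₃ : ℝ} (hb : 0 < b)
    (hA₁ : A₁ = Real.sqrt (2 / b))
    (hA₂ : A₂ = -c / (3 * b ^ 2))
    (hA₃ : A₃ = 5 / (18 * Real.sqrt 2) * c ^ 2 / b ^ ((7:ℝ)/2)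
        - 1 / (6 * Real.sqrt 2) * d / b ^ ((5:ℝ)/2))
    {g : ℝ → ℝ}
    (hT : Tendsto (fun t => (g t - b/2*t^2 - c/6*t^3 - d/24*t^4) / t^4)
        (nhdsWithin 0 (Ioi 0)) (nhds 0)) :
    Tendsto (fun t => (t - A₁ * Real.sqrt (g t) - A₂ * g t - A₃ * (g t) ^ ((3:ℝ)/2))
        / (g t) ^ ((3:ℝ)/2)) (nhdsWithin 0 (Ioi 0)) (nhds 0) := by
  set sb := Real.sqrt (b / 2) with hsbdef
  have hsb : 0 < sb := Real.sqrt_pos.2 (by linarith)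
  have hsb' : sb ≠ 0 := ne_of_gt hsb
  have hsb2 : sb ^ 2 = b / 2 := Real.sq_sqrt (by linarith)
  have hb2 : b = 2 * sb ^ 2 := by rw [hsb2]; ring
  -- constants in terms of sb
  have hA1' : A₁ = 1 / sb := by
    rw [hA₁, hsbdef, show (2/b) = (b/2)⁻¹ by field_simp, Real.sqrt_inv, one_div]
  have hA2' : A₂ = -c / (12 * sb ^ 4) := by rw [hA₂, hb2]; ring_nf
  have hsqb : Real.sqrt 2 * sb = Real.sqrt b := by
    rw [hsbdef, ← Real.sqrt_mul (by norm_num : (0:ℝ) ≤ 2)]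
    congr 1
    ring
  have hs2 : Real.sqrt 2 * Real.sqrt 2 = 2 := Real.mul_self_sqrt (by norm_num)
  have hs2' : Real.sqrt 2 ≠ 0 := by positivity
  have h72 : b ^ ((7:ℝ)/2) = b ^ 3 * Real.sqrt b := by
    rw [show ((7:ℝ)/2) = ((3:ℕ):ℝ) + 1/2 by norm_num, Real.rpow_add hb,
      Real.rpow_natCast, ← Real.sqrt_eq_rpow]
  have h52 : b ^ ((5:ℝ)/2) = b ^ 2 * Real.sqrt b := by
    rw [show ((5:ℝ)/2) = ((2:ℕ):ℝ) + 1/2 by norm_num, Real.rpow_add hb,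
      Real.rpow_natCast, ← Real.sqrt_eq_rpow]
  have h72' : b ^ ((7:ℝ)/2) = 8 * Real.sqrt 2 * sb ^ 7 := by
    rw [h72, ← hsqb, hb2]; ring
  have h52' : b ^ ((5:ℝ)/2) = 4 * Real.sqrt 2 * sb ^ 5 := by
    rw [h52, ← hsqb, hb2]; ring
  have hA3' : A₃ = 5 * c ^ 2 / (288 * sb ^ 7) - d / (48 * sb ^ 5) := by
    rw [hA₃, h72', h52']
    field_simp
    linear_combination (-3456*(240*c^2-288*sb^2*d)) * hs2
  have hA1sb : A₁ * sb = 1 := by rw [hA1']; field_simp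
  have hA2sb : A₂ * sb ^ 2 * (2 * sb) = -(A₁ * (c/6)) := by
    rw [hA2', hA1']; field_simp; ring
  -- auxiliary functions
  set E : ℝ → ℝ := fun t => (g t - b/2*t^2 - c/6*t^3 - d/24*t^4) / t^4 with hEdef
  set H : ℝ → ℝ := fun t => d / 24 + E t with hHdef
  set h : ℝ → ℝ := fun t => b/2 + c/6 * t + H t * t^2 with hhdef
  set v : ℝ → ℝ := fun t => Real.sqrt (h t) with hvdef
  have htend_id : Tendsto (fun t : ℝ => t) (nhdsWithin 0 (Ioi 0)) (nhds 0) :=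
    Filter.Tendsto.mono_right tendsto_id nhdsWithin_le_nhds
  have hH : Tendsto H (nhdsWithin 0 (Ioi 0)) (nhds (d / 24)) := by
    simp only [hHdef]
    have := (tendsto_const_nhds (x := d/24) (f := nhdsWithin (0:ℝ) (Ioi 0))).add hT
    simpa using this
  have hh : Tendsto h (nhdsWithin 0 (Ioi 0)) (nhds (b / 2)) := by
    simp only [hhdef]
    have h1 : Tendsto (fun t => b/2 + c/6 * t + H t * t^2) (nhdsWithin 0 (Ioi 0))
        (nhds (b/2 + c/6 * 0 + (d/24) * 0^2)) :=
      (tendsto_const_nhds.add (tendsto_const_nhds.mul htend_id)).add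
        (hH.mul (htend_id.pow 2))
    simpa using h1
  have hv : Tendsto v (nhdsWithin 0 (Ioi 0)) (nhds sb) := by
    simp only [hvdef]
    have : Tendsto Real.sqrt (nhds (b/2)) (nhds (Real.sqrt (b/2))) :=
      Real.continuous_sqrt.continuousAt
    exact this.comp hh
  have hpos : ∀ᶠ t in nhdsWithin 0 (Ioi 0), 0 < h t :=
    hh.eventually (eventually_gt_nhds (by linarith))
  have ht0 : ∀ᶠ t in nhdsWithin (0:ℝ) (Ioi 0), 0 < t := eventually_mem_nhdsWithin
  have hgt : ∀ᶠ t in nhdsWithin 0 (Ioi 0), g t = t^2 * h t := by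
    filter_upwards [ht0] with t ht
    have ht4 : (t:ℝ) ^ 4 ≠ 0 := by positivity
    have hE : E t * t ^ 4 = g t - b/2*t^2 - c/6*t^3 - d/24*t^4 :=
      div_mul_cancel₀ _ ht4
    simp only [hhdef, hHdef]
    linear_combination -hE
  -- the regular expression Q
  set Q : ℝ → ℝ := fun t => (A₁ * (c/6) * ((c/6) + H t * t) / ((v t + sb) ^ 2 * (2 * sb))
      - A₁ * H t / (v t + sb) - A₂ * (c/6) - A₂ * H t * t - A₃ * (v t) ^ 3) / (v t) ^ 3
    with hQdef
  have heq : ∀ᶠ t in nhdsWithin 0 (Ioi 0),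
      (t - A₁ * Real.sqrt (g t) - A₂ * g t - A₃ * (g t) ^ ((3:ℝ)/2)) / (g t) ^ ((3:ℝ)/2)
        = Q t := by
    filter_upwards [ht0, hpos, hgt] with t ht hht hgteq
    have hv0 : 0 < v t := Real.sqrt_pos.2 hht
    have hvt2 : v t ^ 2 = h t := Real.sq_sqrt hht.le
    have hgpos : 0 ≤ g t := by rw [hgteq]; positivity
    have hsq : Real.sqrt (g t) = t * v t := by
      rw [hgteq, Real.sqrt_mul (sq_nonneg t), Real.sqrt_sq ht.le]
    have h32 : (g t) ^ ((3:ℝ)/2) = t^3 * (v t)^3 := by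
      rw [rpow_three_halves hgpos, hsq]; ring
    have hgid : g t = t^2 * (v t)^2 := by rw [hgteq, hvt2]
    have hv2' : v t ^ 2 = sb ^ 2 + (c/6) * t + H t * t ^ 2 := by
      rw [hvt2, hsb2]
    rw [h32, hsq, hgid]
    exact key_ident ht hv0 hsb hA1sb hA2sb hv2'
  have hden1 : ((sb + sb) ^ 2 * (2 * sb)) ≠ 0 := by positivity
  have hden2 : sb + sb ≠ 0 := by positivity
  have hden3 : (sb ^ 3 : ℝ) ≠ 0 := by positivity
  have hQtend : Tendsto Q (nhdsWithin 0 (Ioi 0))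
      (nhds ((A₁ * (c/6) * ((c/6) + (d/24) * 0) / ((sb + sb) ^ 2 * (2 * sb))
        - A₁ * (d/24) / (sb + sb) - A₂ * (c/6) - A₂ * (d/24) * 0 - A₃ * sb ^ 3) / sb ^ 3)) := by
    simp only [hQdef]
    exact (((((tendsto_const_nhds.mul (tendsto_const_nhds.add (hH.mul htend_id))).div
      (((hv.add tendsto_const_nhds).pow 2).mul tendsto_const_nhds) hden1).sub
        ((tendsto_const_nhds.mul hH).div (hv.add tendsto_const_nhds) hden2)).sub
          tendsto_const_nhds).sub ((tendsto_const_nhds.mul hH).mul htend_id)).sub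
            (tendsto_const_nhds.mul (hv.pow 3)) |>.div (hv.pow 3) hden3
  have hL : (A₁ * (c/6) * ((c/6) + (d/24) * 0) / ((sb + sb) ^ 2 * (2 * sb))
        - A₁ * (d/24) / (sb + sb) - A₂ * (c/6) - A₂ * (d/24) * 0 - A₃ * sb ^ 3) / sb ^ 3 = 0 := by
    rw [hA1', hA2', hA3']
    field_simp
    ring
  rw [hL] at hQtend
  have heq' : (fun t => (t - A₁ * Real.sqrt (g t) - A₂ * g t - A₃ * (g t) ^ ((3:ℝ)/2))
      / (g t) ^ ((3:ℝ)/2)) =ᶠ[nhdsWithin 0 (Ioi 0)] Q := heq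
  exact hQtend.congr' heq'.symm

/-- Third-order expansion of the right inverse `Φ` of `ψ` around the minimizer `ϑ*`:
`Φ(s) = ϑ* + A₁ (s−ζ*)^{1/2} + A₂ (s−ζ*) + A₃ (s−ζ*)^{3/2} + o((s−ζ*)^{3/2})`
as `s → ζ*` from the right. -/
theorem inverse_third_order_expansion
    (ψ Φ : ℝ → ℝ) (ϑstar ζstar δ A₁ A₂ A₃ : ℝ) (hδ : 0 < δ)
    (hsmooth : ∃ U ∈ nhds ϑstar, ContDiffOn ℝ 4 ψ U)
    (hderiv : iteratedDeriv 1 ψ ϑstar = 0)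
    (hderiv2 : 0 < iteratedDeriv 2 ψ ϑstar)
    (hζ : ζstar = ψ ϑstar)
    (hΦinv : ∀ s ∈ Ioo ζstar (ζstar + δ), ψ (Φ s) = s)
    (hΦgt : ∀ s ∈ Ioo ζstar (ζstar + δ), ϑstar < Φ s)
    (hΦlim : Tendsto Φ (nhdsWithin ζstar (Ioi ζstar)) (nhds ϑstar))
    (hA₁ : A₁ = Real.sqrt (2 / iteratedDeriv 2 ψ ϑstar))
    (hA₂ : A₂ = -(iteratedDeriv 3 ψ ϑstar) / (3 * (iteratedDeriv 2 ψ ϑstar) ^ 2))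
    (hA₃ : A₃ = (5 / (18 * Real.sqrt 2)) * (iteratedDeriv 3 ψ ϑstar) ^ 2
          / (iteratedDeriv 2 ψ ϑstar) ^ ((7 : ℝ) / 2)
        - (1 / (6 * Real.sqrt 2)) * iteratedDeriv 4 ψ ϑstar
          / (iteratedDeriv 2 ψ ϑstar) ^ ((5 : ℝ) / 2)) :
    Tendsto
      (fun s => (Φ s - (ϑstar + A₁ * Real.sqrt (s - ζstar) + A₂ * (s - ζstar)
          + A₃ * (s - ζstar) ^ ((3 : ℝ) / 2))) / (s - ζstar) ^ ((3 : ℝ) / 2))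
      (nhdsWithin ζstar (Ioi ζstar)) (nhds 0) := by
  have hb : 0 < iteratedDeriv 2 ψ ϑstar := hderiv2
  -- the map t ↦ ϑ* + t
  have hmap : Tendsto (fun t : ℝ => ϑstar + t) (nhdsWithin 0 (Ioi 0))
      (nhdsWithin ϑstar (Ioi ϑstar)) := by
    apply tendsto_nhdsWithin_of_tendsto_nhds_of_eventually_within
    · have : Tendsto (fun t : ℝ => ϑstar + t) (nhdsWithin 0 (Ioi 0)) (nhds (ϑstar + 0)) :=
        tendsto_const_nhds.add (tendsto_id.mono_right nhdsWithin_le_nhds)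
      simpa using this
    · filter_upwards [eventually_mem_nhdsWithin] with t ht
      have : (0:ℝ) < t := ht
      simp only [mem_Ioi]
      linarith
  -- Taylor expansion of g
  have hT : Tendsto (fun t => ((fun t => ψ (ϑstar + t) - ζstar) t
        - (iteratedDeriv 2 ψ ϑstar)/2*t^2 - (iteratedDeriv 3 ψ ϑstar)/6*t^3
        - (iteratedDeriv 4 ψ ϑstar)/24*t^4) / t^4)
      (nhdsWithin 0 (Ioi 0)) (nhds 0) := by
    have := (taylor_peano hsmooth).comp hmap
    apply this.congr
    intro t
    simp only [Function.comp]
    rw [hderiv, ← hζ]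
    ring_nf
  have hkey := key_limit hb hA₁ hA₂ hA₃ hT
  -- the map s ↦ Φ s - ϑ*
  have hIoo : Ioo ζstar (ζstar + δ) ∈ nhdsWithin ζstar (Ioi ζstar) :=
    Ioo_mem_nhdsGT (by linarith)
  have hΦt : Tendsto (fun s => Φ s - ϑstar) (nhdsWithin ζstar (Ioi ζstar))
      (nhdsWithin 0 (Ioi 0)) := by
    apply tendsto_nhdsWithin_of_tendsto_nhds_of_eventually_within
    · have : Tendsto (fun s => Φ s - ϑstar) (nhdsWithin ζstar (Ioi ζstar))
          (nhds (ϑstar - ϑstar)) := hΦlim.sub_const ϑstar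
      simpa using this
    · filter_upwards [hIoo] with s hs
      have := hΦgt s hs
      simp only [mem_Ioi]
      linarith
  have hcomp := hkey.comp hΦt
  apply hcomp.congr'
  filter_upwards [hIoo] with s hs
  have hψs : ψ (Φ s) = s := hΦinv s hs
  have harg : ϑstar + (Φ s - ϑstar) = Φ s := by ring
  simp only [Function.comp]
  rw [harg, hψs]
  congr 1
  ring
end

section
/- Let ϑ*, ζ*, B₁, B₂, B₃ be real numbers, let α, β ≥ 0, and let ψ̂ : ℝ → ℝ be three times continuously differentiable on a neighborhood of α + ϑ* and differentiable at 0, with ψ̂(α + ϑ*) ≠ 0, ψ̂(α + β) ≠ 0 and ψ̂(β) ≠ ζ*. Let Φ̂ be a real-valued function on an interval (ζ*, ζ* + δ), δ > 0, satisfying, as ϑ → ζ* from the right, Φ̂(ϑ) = ϑ* + B₁ (ϑ − ζ*)^{1/2} + B₂ (ϑ − ζ*) + B₃ (ϑ − ζ*)^{3/2} + o((ϑ − ζ*)^{3/2}). Define L(ϑ) := (ψ̂'(0)/(ϑ − ψ̂(β))) · ( (α + β)/ψ̂(α + β) − (α + Φ̂(ϑ))/ψ̂(α + Φ̂(ϑ))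 ). Then there exist real numbers C₂ and C₃ such that, as ϑ → ζ* from the right, L(ϑ) = C₀ + C₁ (ϑ − ζ*)^{1/2} + C₂ (ϑ − ζ*) + C₃ (ϑ − ζ*)^{3/2} + o((ϑ − ζ*)^{3/2}), where C₀ = ( (α + β)/ψ̂(α + β) − (α + ϑ*)/ψ̂(α + ϑ*) ) · ψ̂'(0)/(ζ* − ψ̂(β)) and C₁ = −ψ̂'(0) B₁ (ψ̂(α + ϑ*) − (α + ϑ*) ψ̂'(α + ϑ*)) / (ψ̂(α + ϑ*)² (ζ* − ψ̂(β))). -/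
open Real Filter Set

lemma peano3 {g : ℝ → ℝ} {a : ℝ} (hg : ContDiffAt ℝ 3 g a) :
    ∃ g₂ g₃ : ℝ, Tendsto (fun t => (g (a + t) - (g a + deriv g a * t + g₂ * t ^ 2 + g₃ * t ^ 3)) / t ^ 3)
      (nhdsWithin (0:ℝ) {(0:ℝ)}ᶜ) (nhds 0) := by
  obtain ⟨u, hu, hgu⟩ := hg.contDiffOn le_rfl (by norm_num)
  set V := interior u with hV
  have hVo : IsOpen V := isOpen_interior
  have haV : a ∈ V := mem_interior_iff_mem_nhds.mpr hu
  have hgV : ContDiffOn ℝ 3 g V := hgu.mono interior_subset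
  have hf1 : ContDiffOn ℝ 2 (deriv g) V := hgV.deriv_of_isOpen hVo (by norm_num)
  have hf2 : ContDiffOn ℝ 1 (deriv (deriv g)) V := hf1.deriv_of_isOpen hVo (by norm_num)
  have hdg : ∀ x ∈ V, HasDerivAt g (deriv g x) x := fun x hx =>
    ((hgV.differentiableOn (by norm_num)).differentiableAt (hVo.mem_nhds hx)).hasDerivAt
  have hdf1 : ∀ x ∈ V, HasDerivAt (deriv g) (deriv (deriv g) x) x := fun x hx =>
    ((hf1.differentiableOn (by norm_num)).differentiableAt (hVo.mem_nhds hx)).hasDerivAt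
  have hdf2a : HasDerivAt (deriv (deriv g)) (deriv (deriv (deriv g)) a) a :=
    ((hf2.differentiableOn (by norm_num)).differentiableAt (hVo.mem_nhds haV)).hasDerivAt
  set d₁ := deriv g a
  set d₂ := deriv (deriv g) a
  set d₃ := deriv (deriv (deriv g)) a
  refine ⟨d₂ / 2, d₃ / 6, ?_⟩
  have hVev : ∀ᶠ x in nhdsWithin a {a}ᶜ, x ∈ V :=
    (hVo.eventually_mem haV).filter_mono nhdsWithin_le_nhds
  have hne : ∀ᶠ x in nhdsWithin a {a}ᶜ, x ≠ a := by
    filter_upwards [self_mem_nhdsWithin] with x hx using hx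
  -- level 3 : slope
  have hdiv2 : Tendsto (fun x => (deriv (deriv g) x - (d₂ + d₃ * (x - a))) / (6 * (x - a)))
      (nhdsWithin a {a}ᶜ) (nhds 0) := by
    have hslope := hasDerivAt_iff_tendsto_slope.mp hdf2a
    have h2 : Tendsto (fun x => (slope (deriv (deriv g)) a x - d₃) / 6)
        (nhdsWithin a {a}ᶜ) (nhds ((d₃ - d₃) / 6)) := (hslope.sub_const d₃).div_const 6
    rw [show (d₃ - d₃) / 6 = (0:ℝ) by ring] at h2
    refine h2.congr' ?_
    filter_upwards [hne] with x hx
    rw [slope_def_field]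
    have : x - a ≠ 0 := sub_ne_zero.mpr hx
    field_simp
    ring
  -- level 2
  have hdiv1 : Tendsto (fun x => (deriv g x - (d₁ + d₂ * (x - a) + d₃ / 2 * (x - a) ^ 2)) / (3 * (x - a) ^ 2))
      (nhdsWithin a {a}ᶜ) (nhds 0) := by
    apply HasDerivAt.lhopital_zero_nhdsNE (f' := fun x => deriv (deriv g) x - (d₂ + d₃ * (x - a)))
      (g' := fun x => 6 * (x - a))
    · filter_upwards [hVev] with x hx
      have hp : HasDerivAt (fun x => d₁ + d₂ * (x - a) + d₃ / 2 * (x - a) ^ 2)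
          (d₂ + d₃ * (x - a)) x := by
        have h1 : HasDerivAt (fun x : ℝ => x - a) 1 x := (hasDerivAt_id x).sub_const a
        have := ((h1.const_mul d₂).const_add d₁).add ((h1.pow 2).const_mul (d₃ / 2))
        refine this.congr_deriv ?_
        ring
      exact (hdf1 x hx).sub hp
    · filter_upwards [hVev] with x hx
      have h1 : HasDerivAt (fun x : ℝ => x - a) 1 x := (hasDerivAt_id x).sub_const a
      have := (h1.pow 2).const_mul (3:ℝ)
      refine this.congr_deriv ?_
      ring
    · filter_upwards [hne] with x hx
      have : x - a ≠ 0 := sub_ne_zero.mpr hx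
      positivity
    · have hc : ContinuousAt (fun x => deriv g x - (d₁ + d₂ * (x - a) + d₃ / 2 * (x - a) ^ 2)) a := by
        have := (hdf1 a haV).differentiableAt.continuousAt
        fun_prop
      have h2 : Tendsto (fun x => deriv g x - (d₁ + d₂ * (x - a) + d₃ / 2 * (x - a) ^ 2))
          (nhds a) (nhds 0) := by simpa [d₁] using hc.tendsto
      exact h2.mono_left nhdsWithin_le_nhds
    · have hc : ContinuousAt (fun x : ℝ => 3 * (x - a) ^ 2) a := by fun_prop
      have h2 : Tendsto (fun x : ℝ => 3 * (x - a) ^ 2) (nhds a) (nhds 0) := by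
        simpa using hc.tendsto
      exact h2.mono_left nhdsWithin_le_nhds
    · refine hdiv2.congr' ?_
      filter_upwards [hne] with x hx
      rfl
  -- level 1
  have main : Tendsto (fun x => (g x - (g a + d₁ * (x - a) + d₂ / 2 * (x - a) ^ 2 + d₃ / 6 * (x - a) ^ 3))
      / (x - a) ^ 3) (nhdsWithin a {a}ᶜ) (nhds 0) := by
    apply HasDerivAt.lhopital_zero_nhdsNE
      (f' := fun x => deriv g x - (d₁ + d₂ * (x - a) + d₃ / 2 * (x - a) ^ 2))
      (g' := fun x => 3 * (x - a) ^ 2)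
    · filter_upwards [hVev] with x hx
      have h1 : HasDerivAt (fun x : ℝ => x - a) 1 x := (hasDerivAt_id x).sub_const a
      have hp : HasDerivAt (fun x => g a + d₁ * (x - a) + d₂ / 2 * (x - a) ^ 2 + d₃ / 6 * (x - a) ^ 3)
          (d₁ + d₂ * (x - a) + d₃ / 2 * (x - a) ^ 2) x := by
        have := (((h1.const_mul d₁).const_add (g a)).add ((h1.pow 2).const_mul (d₂ / 2))).add
          ((h1.pow 3).const_mul (d₃ / 6))
        refine this.congr_deriv ?_
        ring
      exact (hdg x hx).sub hp
    · filter_upwards [hVev] with x hx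
      have h1 : HasDerivAt (fun x : ℝ => x - a) 1 x := (hasDerivAt_id x).sub_const a
      refine (h1.pow 3).congr_deriv ?_
      norm_num
    · filter_upwards [hne] with x hx
      have h2 : x - a ≠ 0 := sub_ne_zero.mpr hx
      positivity
    · have hc : ContinuousAt (fun x => g x - (g a + d₁ * (x - a) + d₂ / 2 * (x - a) ^ 2
          + d₃ / 6 * (x - a) ^ 3)) a := by
        have := (hdg a haV).differentiableAt.continuousAt
        fun_prop
      have h2 : Tendsto (fun x => g x - (g a + d₁ * (x - a) + d₂ / 2 * (x - a) ^ 2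
          + d₃ / 6 * (x - a) ^ 3)) (nhds a) (nhds 0) := by simpa using hc.tendsto
      exact h2.mono_left nhdsWithin_le_nhds
    · have hc : ContinuousAt (fun x : ℝ => (x - a) ^ 3) a := by fun_prop
      have h2 : Tendsto (fun x : ℝ => (x - a) ^ 3) (nhds a) (nhds 0) := by
        simpa using hc.tendsto
      exact h2.mono_left nhdsWithin_le_nhds
    · exact hdiv1
  have hmap : Tendsto (fun t : ℝ => a + t) (nhdsWithin (0:ℝ) {(0:ℝ)}ᶜ) (nhdsWithin a {a}ᶜ) := by
    rw [tendsto_nhdsWithin_iff]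
    constructor
    · have : Tendsto (fun t : ℝ => a + t) (nhds 0) (nhds (a + 0)) := (continuous_const.add continuous_id).tendsto 0
      simpa using this.mono_left nhdsWithin_le_nhds
    · filter_upwards [self_mem_nhdsWithin] with t ht
      simpa using ht
  have := main.comp hmap
  refine this.congr ?_
  intro t
  simp only [Function.comp_apply, add_sub_cancel_left]

set_option maxHeartbeats 1600000 in
lemma master_alg (s c d K g0 g1 g2 g3 B1 B2 B3 ε r : ℝ)
    (hs : s ≠ 0) (hc : c ≠ 0) (hcs : s ^ 2 + c ≠ 0) :
    (d / (s ^ 2 + c) * (K - (g0 + g1 * (s * (B1 + B2 * s + (B3 + ε) * s ^ 2))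
        + g2 * (s * (B1 + B2 * s + (B3 + ε) * s ^ 2)) ^ 2
        + g3 * (s * (B1 + B2 * s + (B3 + ε) * s ^ 2)) ^ 3
        + (s * (B1 + B2 * s + (B3 + ε) * s ^ 2)) ^ 3 * r))
      - (d * (K - g0) / c + d * (-(g1 * B1)) / c * s
        + d * (-(g1 * B2 + g2 * B1 ^ 2) / c - (K - g0) / c ^ 2) * s ^ 2
        + d * (-(g1 * B3 + 2 * g2 * B1 * B2 + g3 * B1 ^ 3) / c - -(g1 * B1) / c ^ 2) * s ^ 3))
      / s ^ 3
    = d * ((-(g1 * ε)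
        - g2 * (2 * B1 * (B3 + ε) + B2 ^ 2 + 2 * B2 * (B3 + ε) * s
          + (B3 + ε) ^ 2 * s ^ 2) * s
        - g3 * (B2 + (B3 + ε) * s) * ((B1 + B2 * s + (B3 + ε) * s ^ 2) ^ 2
          + (B1 + B2 * s + (B3 + ε) * s ^ 2) * B1 + B1 ^ 2) * s
        - (B1 + B2 * s + (B3 + ε) * s ^ 2) ^ 3 * r) / (c + s ^ 2)
      + s * ((K - g0) + -(g1 * B1) * s - c * (-(g1 * B2 + g2 * B1 ^ 2))
          - c * (-(g1 * B3 + 2 * g2 * B1 * B2 + g3 * B1 ^ 3)) * s) / (c ^ 2 * (c + s ^ 2))) := by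
  have hcs' : c + s ^ 2 ≠ 0 := by rwa [add_comm]
  field_simp
  ring

set_option maxHeartbeats 1000000 in
/-- Spectrally positive case of Proposition 3.1: expansion of the master transform
`L(ϑ) = (ψ̂'(0)/(ϑ − ψ̂(β))) ((α+β)/ψ̂(α+β) − (α+Φ̂(ϑ))/ψ̂(α+Φ̂(ϑ)))` at `ζ*`. -/
theorem master_transform_expansion_spectrally_positive
    (ψhat Φhat : ℝ → ℝ) (ϑstar ζstar δ B₁ B₂ B₃ α β : ℝ) (hδ : 0 < δ)
    (hα : 0 ≤ α) (hβ : 0 ≤ β)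
    (hsmooth : ∃ U ∈ nhds (α + ϑstar), ContDiffOn ℝ 3 ψhat U)
    (hdiff0 : DifferentiableAt ℝ ψhat 0)
    (hne₁ : ψhat (α + ϑstar) ≠ 0) (hne₂ : ψhat (α + β) ≠ 0) (hne₃ : ψhat β ≠ ζstar)
    (hΦ : Tendsto
      (fun ϑ => (Φhat ϑ - (ϑstar + B₁ * Real.sqrt (ϑ - ζstar) + B₂ * (ϑ - ζstar)
          + B₃ * (ϑ - ζstar) ^ ((3 : ℝ) / 2))) / (ϑ - ζstar) ^ ((3 : ℝ) / 2))
      (nhdsWithin ζstar (Ioi ζstar)) (nhds 0))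
    (L : ℝ → ℝ)
    (hL : ∀ ϑ ∈ Ioo ζstar (ζstar + δ),
      L ϑ = (deriv ψhat 0 / (ϑ - ψhat β))
        * ((α + β) / ψhat (α + β) - (α + Φhat ϑ) / ψhat (α + Φhat ϑ)))
    (C₀ C₁ : ℝ)
    (hC₀ : C₀ = ((α + β) / ψhat (α + β) - (α + ϑstar) / ψhat (α + ϑstar))
        * deriv ψhat 0 / (ζstar - ψhat β))
    (hC₁ : C₁ = -(deriv ψhat 0) * B₁
        * (ψhat (α + ϑstar) - (α + ϑstar) * deriv ψhat (α + ϑstar))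
        / (ψhat (α + ϑstar) ^ 2 * (ζstar - ψhat β))) :
    ∃ C₂ C₃ : ℝ,
      Tendsto
        (fun ϑ => (L ϑ - (C₀ + C₁ * Real.sqrt (ϑ - ζstar) + C₂ * (ϑ - ζstar)
            + C₃ * (ϑ - ζstar) ^ ((3 : ℝ) / 2))) / (ϑ - ζstar) ^ ((3 : ℝ) / 2))
        (nhdsWithin ζstar (Ioi ζstar)) (nhds 0) := by
  classical
  have hc : ζstar - ψhat β ≠ 0 := sub_ne_zero.mpr (Ne.symm hne₃)
  set l := nhdsWithin ζstar (Ioi ζstar) with hl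
  set c : ℝ := ζstar - ψhat β with hcdef
  set dd : ℝ := deriv ψhat 0 with hdd
  set K : ℝ := (α + β) / ψhat (α + β) with hKdef
  set g : ℝ → ℝ := fun x => (α + x) / ψhat (α + x) with hgdef
  -- smoothness of g at ϑstar
  obtain ⟨U, hU, hψU⟩ := hsmooth
  have hψat : ContDiffAt ℝ 3 ψhat (α + ϑstar) := hψU.contDiffAt hU
  have hinner : ContDiffAt ℝ 3 (fun x : ℝ => α + x) ϑstar :=
    (contDiff_const.add contDiff_id).contDiffAt
  have hcomp : ContDiffAt ℝ 3 (fun x : ℝ => ψhat (α + x)) ϑstar := hψat.comp ϑstar hinner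
  have hgat : ContDiffAt ℝ 3 g ϑstar := hinner.div hcomp hne₁
  -- derivative of g at ϑstar
  have hψdiff : DifferentiableAt ℝ ψhat (α + ϑstar) := hψat.differentiableAt (by norm_num)
  have hnum : HasDerivAt (fun x : ℝ => α + x) 1 ϑstar := (hasDerivAt_id ϑstar).const_add α
  have hden : HasDerivAt (fun x : ℝ => ψhat (α + x)) (deriv ψhat (α + ϑstar)) ϑstar := by
    have := (hψdiff.hasDerivAt).comp ϑstar hnum
    exact this.congr_deriv (mul_one _)
  set gone : ℝ := (ψhat (α + ϑstar) - (α + ϑstar) * deriv ψhat (α + ϑstar))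
      / (ψhat (α + ϑstar)) ^ 2 with hgone
  have hg'at : HasDerivAt g gone ϑstar := by
    have := hnum.div hden hne₁
    refine this.congr_deriv ?_
    rw [hgone]; ring
  have hderivg : deriv g ϑstar = gone := hg'at.deriv
  -- Peano expansion of g at ϑstar
  obtain ⟨g₂, g₃, hpe⟩ := peano3 hgat
  rw [hderivg] at hpe
  -- remainder function
  set ρ : ℝ → ℝ := fun t => if t = 0 then 0
      else (g (ϑstar + t) - (g ϑstar + gone * t + g₂ * t ^ 2 + g₃ * t ^ 3)) / t ^ 3 with hρdef
  have hρ0 : Tendsto ρ (nhds 0) (nhds 0) := by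
    have hsup : Tendsto ρ (nhdsWithin (0:ℝ) {(0:ℝ)}ᶜ ⊔ pure 0) (nhds 0) := by
      rw [tendsto_sup]
      constructor
      · refine hpe.congr' ?_
        filter_upwards [self_mem_nhdsWithin] with t ht
        have ht' : t ≠ 0 := ht
        simp [hρdef, ht']
      · have h0 : ρ 0 = 0 := by simp [hρdef]
        have := tendsto_pure_nhds ρ 0
        rwa [h0] at this
    rwa [nhdsNE_sup_pure] at hsup
  have hgT : ∀ t : ℝ, g (ϑstar + t)
      = g ϑstar + gone * t + g₂ * t ^ 2 + g₃ * t ^ 3 + t ^ 3 * ρ t := by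
    intro t
    by_cases ht : t = 0
    · simp [hρdef, ht]
    · have ht3 : t ^ 3 ≠ 0 := pow_ne_zero _ ht
      simp only [hρdef, if_neg ht]
      field_simp
      ring
  -- the functions s, e, h along l
  set e : ℝ → ℝ := fun ϑ => (Φhat ϑ - (ϑstar + B₁ * Real.sqrt (ϑ - ζstar) + B₂ * (ϑ - ζstar)
      + B₃ * (ϑ - ζstar) ^ ((3 : ℝ) / 2))) / (ϑ - ζstar) ^ ((3 : ℝ) / 2) with hedef
  have he : Tendsto e l (nhds 0) := hΦ
  have hIoo : ∀ᶠ ϑ in l, ϑ ∈ Ioo ζstar (ζstar + δ) := by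
    have : Ioo ζstar (ζstar + δ) ∈ l := Ioo_mem_nhdsGT (by linarith)
    exact this
  have hsub : Tendsto (fun ϑ : ℝ => ϑ - ζstar) l (nhds 0) := by
    have : Tendsto (fun ϑ : ℝ => ϑ - ζstar) (nhds ζstar) (nhds (ζstar - ζstar)) :=
      (continuous_id.sub continuous_const).tendsto ζstar
    simpa using this.mono_left nhdsWithin_le_nhds
  have hs0 : Tendsto (fun ϑ : ℝ => Real.sqrt (ϑ - ζstar)) l (nhds 0) := by
    have := (Real.continuous_sqrt.tendsto 0).comp hsub
    simpa [Function.comp_def] using this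
  have hcu : ∀ᶠ ϑ in l, ϑ - ψhat β ≠ 0 := by
    have hts : Tendsto (fun ϑ : ℝ => ϑ - ψhat β) l (nhds c) := by
      have : Tendsto (fun ϑ : ℝ => ϑ - ψhat β) (nhds ζstar) (nhds (ζstar - ψhat β)) :=
        (continuous_id.sub continuous_const).tendsto ζstar
      exact this.mono_left nhdsWithin_le_nhds
    exact hts.eventually_ne hc
  -- basic pointwise facts
  have hfacts : ∀ᶠ ϑ in l, 0 < ϑ - ζstar ∧ Real.sqrt (ϑ - ζstar) ^ 2 = ϑ - ζstar ∧
      (ϑ - ζstar) ^ ((3 : ℝ) / 2) = Real.sqrt (ϑ - ζstar) ^ 3 ∧ 0 < Real.sqrt (ϑ - ζstar) := by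
    filter_upwards [self_mem_nhdsWithin] with ϑ hϑ
    have hu : 0 < ϑ - ζstar := sub_pos.mpr hϑ
    refine ⟨hu, Real.sq_sqrt hu.le, ?_, Real.sqrt_pos.mpr hu⟩
    rw [Real.sqrt_eq_rpow, ← Real.rpow_natCast ((ϑ - ζstar) ^ ((1:ℝ)/2)) 3,
      ← Real.rpow_mul hu.le]
    norm_num
  -- expansion of Φhat
  have hΦeq : ∀ᶠ ϑ in l, Φhat ϑ = ϑstar + B₁ * Real.sqrt (ϑ - ζstar)
      + B₂ * Real.sqrt (ϑ - ζstar) ^ 2 + B₃ * Real.sqrt (ϑ - ζstar) ^ 3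
      + Real.sqrt (ϑ - ζstar) ^ 3 * e ϑ := by
    filter_upwards [hfacts] with ϑ ⟨hu, hs2, h32, hsp⟩
    have hsne : Real.sqrt (ϑ - ζstar) ≠ 0 := ne_of_gt hsp
    have h3ne : Real.sqrt (ϑ - ζstar) ^ 3 ≠ 0 := pow_ne_zero _ hsne
    have he1 : e ϑ = (Φhat ϑ - (ϑstar + B₁ * Real.sqrt (ϑ - ζstar) + B₂ * (ϑ - ζstar)
        + B₃ * (ϑ - ζstar) ^ ((3 : ℝ) / 2))) / (ϑ - ζstar) ^ ((3 : ℝ) / 2) := rfl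
    rw [h32, eq_div_iff h3ne] at he1
    rw [hs2]
    linear_combination -he1
  set h : ℝ → ℝ := fun ϑ => Φhat ϑ - ϑstar with hhdef
  have hh0 : Tendsto h l (nhds 0) := by
    have hrhs : Tendsto (fun ϑ => B₁ * Real.sqrt (ϑ - ζstar) + B₂ * Real.sqrt (ϑ - ζstar) ^ 2
        + (B₃ + e ϑ) * Real.sqrt (ϑ - ζstar) ^ 3) l
        (nhds (B₁ * 0 + B₂ * 0 ^ 2 + (B₃ + 0) * 0 ^ 3)) :=
      ((hs0.const_mul B₁).add ((hs0.pow 2).const_mul B₂)).add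
        ((tendsto_const_nhds.add he).mul (hs0.pow 3))
    norm_num at hrhs
    refine hrhs.congr' ?_
    filter_upwards [hΦeq] with ϑ hϑ
    simp only [hhdef]
    rw [hϑ]; ring
  have hr : Tendsto (fun ϑ => ρ (h ϑ)) l (nhds 0) := hρ0.comp hh0
  -- coefficients
  set M₀ : ℝ := K - g ϑstar with hM₀
  set M₁ : ℝ := -(gone * B₁) with hM₁
  set M₂ : ℝ := -(gone * B₂ + g₂ * B₁ ^ 2) with hM₂
  set M₃ : ℝ := -(gone * B₃ + 2 * g₂ * B₁ * B₂ + g₃ * B₁ ^ 3) with hM₃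
  have hg0 : g ϑstar = (α + ϑstar) / ψhat (α + ϑstar) := rfl
  have hC₀' : C₀ = dd * M₀ / c := by
    rw [hC₀, hM₀, hg0]; ring
  have hC₁' : C₁ = dd * M₁ / c := by
    rw [hC₁, hM₁, hgone]
    field_simp
  refine ⟨dd * (M₂ / c - M₀ / c ^ 2), dd * (M₃ / c - M₁ / c ^ 2), ?_⟩
  -- the limit function
  set F : ℝ × ℝ × ℝ → ℝ := fun p =>
    dd * ((-(gone * p.2.1)
        - g₂ * (2 * B₁ * (B₃ + p.2.1) + B₂ ^ 2 + 2 * B₂ * (B₃ + p.2.1) * p.1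
          + (B₃ + p.2.1) ^ 2 * p.1 ^ 2) * p.1
        - g₃ * (B₂ + (B₃ + p.2.1) * p.1) * ((B₁ + B₂ * p.1 + (B₃ + p.2.1) * p.1 ^ 2) ^ 2
          + (B₁ + B₂ * p.1 + (B₃ + p.2.1) * p.1 ^ 2) * B₁ + B₁ ^ 2) * p.1
        - (B₁ + B₂ * p.1 + (B₃ + p.2.1) * p.1 ^ 2) ^ 3 * p.2.2) / (c + p.1 ^ 2)
      + p.1 * (M₀ + M₁ * p.1 - c * M₂ - c * M₃ * p.1) / (c ^ 2 * (c + p.1 ^ 2))) with hFdef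
  have hFc : ContinuousAt F ((0 : ℝ), (0 : ℝ), (0 : ℝ)) := by
    apply ContinuousAt.mul continuousAt_const
    apply ContinuousAt.add
    · apply ContinuousAt.div
      · fun_prop
      · fun_prop
      · norm_num [hc]
    · apply ContinuousAt.div
      · fun_prop
      · fun_prop
      · simp only [Prod.fst]
        norm_num [hc]
  have hF0 : F ((0 : ℝ), (0 : ℝ), (0 : ℝ)) = 0 := by
    simp only [hFdef]
    norm_num
  have htuple : Tendsto (fun ϑ => (Real.sqrt (ϑ - ζstar), e ϑ, ρ (h ϑ))) l
      (nhds ((0 : ℝ), (0 : ℝ), (0 : ℝ))) :=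
    hs0.prodMk_nhds (he.prodMk_nhds hr)
  have hlim : Tendsto (fun ϑ => F (Real.sqrt (ϑ - ζstar), e ϑ, ρ (h ϑ))) l (nhds 0) := by
    have := hFc.tendsto.comp htuple
    rwa [hF0] at this
  refine hlim.congr' ?_
  filter_upwards [hIoo, hΦeq, hcu, hfacts] with ϑ hIo hΦe hcuϑ ⟨hu, hs2, h32, hsp⟩
  set sθ := Real.sqrt (ϑ - ζstar) with hsθ
  have hsne : sθ ≠ 0 := ne_of_gt hsp
  have hLv := hL ϑ hIo
  have hΦh : ϑstar + h ϑ = Φhat ϑ := by simp [hhdef]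
  have hGv : (α + Φhat ϑ) / ψhat (α + Φhat ϑ)
      = g ϑstar + gone * h ϑ + g₂ * h ϑ ^ 2 + g₃ * h ϑ ^ 3 + h ϑ ^ 3 * ρ (h ϑ) := by
    rw [← hΦh]
    exact hgT (h ϑ)
  have hq : h ϑ = sθ * (B₁ + B₂ * sθ + (B₃ + e ϑ) * sθ ^ 2) := by
    simp only [hhdef]
    rw [hΦe]; ring
  have hden' : ϑ - ψhat β = sθ ^ 2 + c := by rw [hcdef]; rw [hs2]; ring
  have hscne : sθ ^ 2 + c ≠ 0 := by rw [← hden']; exact hcuϑ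
  simp only [hFdef]
  rw [hLv, hGv, hq, hC₀', hC₁', h32, ← hs2, hden', hM₀, hM₁, hM₂, hM₃]
  exact (master_alg sθ c dd K (g ϑstar) gone g₂ g₃ B₁ B₂ B₃ (e ϑ) (ρ (sθ * (B₁ + B₂ * sθ + (B₃ + e ϑ) * sθ ^ 2))) hsne hc hscne).symm
end
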